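/- Let A and B be n×n complex matrices. Then for every real t > 0, 2·‖A+B‖_F² ≤ (2+t)·tr(|A|² + |B|²) + (1/t)·tr(|A||B| + |B||A|). -/

import Mathlib

open scoped Matrix ComplexOrder

set_option maxHeartbeats 1000000
namespace FrobAux

open Matrix Finset

variable {n : ℕ}

noncomputable def msqrt {M : Matrix (Fin n) (Fin n) ℂ} (hM : M.PosSemidef) :
    Matrix (Fin n) (Fin n) ℂ :=
  (hM.1.eigenvectorUnitary : Matrix (Fin n) (Fin n) ℂ) *
    Matrix.diagonal ((↑) ∘ Real.sqrt ∘ hM.1.eigenvalues) *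
    (star (hM.1.eigenvectorUnitary : Matrix (Fin n) (Fin n) ℂ))

lemma msqrt_mul_self {M : Matrix (Fin n) (Fin n) ℂ} (hM : M.PosSemidef) :
    msqrt hM * msqrt hM = M := by
  unfold msqrt
  set U : Matrix (Fin n) (Fin n) ℂ := (hM.1.eigenvectorUnitary : Matrix (Fin n) (Fin n) ℂ)
  have hU : star U * U = 1 := Unitary.coe_star_mul_self _
  have hD : Matrix.diagonal ((↑) ∘ Real.sqrt ∘ hM.1.eigenvalues) *
      Matrix.diagonal ((↑) ∘ Real.sqrt ∘ hM.1.eigenvalues)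
      = Matrix.diagonal ((↑) ∘ hM.1.eigenvalues : Fin n → ℂ) := by
    rw [Matrix.diagonal_mul_diagonal]
    congr 1
    funext i
    simp only [Function.comp_apply]
    rw [← Complex.ofReal_mul, Real.mul_self_sqrt (hM.eigenvalues_nonneg i)]
  calc U * Matrix.diagonal ((↑) ∘ Real.sqrt ∘ hM.1.eigenvalues) * star U *
        (U * Matrix.diagonal ((↑) ∘ Real.sqrt ∘ hM.1.eigenvalues) * star U)
      = U * (Matrix.diagonal ((↑) ∘ Real.sqrt ∘ hM.1.eigenvalues) *
        Matrix.diagonal ((↑) ∘ Real.sqrt ∘ hM.1.eigenvalues)) * star U := by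
        simp only [Matrix.mul_assoc]
        rw [← Matrix.mul_assoc (star U) U, hU, Matrix.one_mul]
    _ = M := by
        rw [hD]
        have h := hM.1.spectral_theorem
        rw [Unitary.conjStarAlgAut_apply] at h
        exact h.symm

lemma posSemidef_msqrt {M : Matrix (Fin n) (Fin n) ℂ} (hM : M.PosSemidef) :
    (msqrt hM).PosSemidef := by
  have hD : (Matrix.diagonal ((↑) ∘ Real.sqrt ∘ hM.1.eigenvalues : Fin n → ℂ)).PosSemidef :=
    Matrix.posSemidef_diagonal_iff.mpr (fun i => Complex.zero_le_real.mpr (Real.sqrt_nonneg _))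
  have := hD.mul_mul_conjTranspose_same
    (hM.1.eigenvectorUnitary : Matrix (Fin n) (Fin n) ℂ)
  unfold msqrt
  rw [Matrix.star_eq_conjTranspose]
  exact this

lemma exists_ct {M : Matrix (Fin n) (Fin n) ℂ} (hM : M.PosSemidef) :
    ∃ X : Matrix (Fin n) (Fin n) ℂ, M = Xᴴ * X :=
  ⟨msqrt hM, by rw [(posSemidef_msqrt hM).isHermitian.eq, msqrt_mul_self]⟩

lemma trace_form (X Y : Matrix (Fin n) (Fin n) ℂ) :
    (Xᴴ * Y).trace = ∑ p : Fin n × Fin n, (starRingEnd ℂ) (X p.1 p.2) * Y p.1 p.2 := by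
  rw [Matrix.trace, Fintype.sum_prod_type]
  simp only [Matrix.diag_apply, Matrix.mul_apply, Matrix.conjTranspose_apply]
  rw [Finset.sum_comm]
  simp [Complex.star_def]

lemma trace_self_re (X : Matrix (Fin n) (Fin n) ℂ) :
    ((Xᴴ * X).trace).re = ∑ p : Fin n × Fin n, ‖X p.1 p.2‖ ^ 2 := by
  rw [trace_form, Complex.re_sum]
  congr 1
  ext p
  rw [mul_comm, Complex.mul_conj]
  simp [Complex.sq_norm]

lemma trace_self_re_nonneg (X : Matrix (Fin n) (Fin n) ℂ) :
    0 ≤ ((Xᴴ * X).trace).re := by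
  rw [trace_self_re]; positivity

/-- Cauchy–Schwarz for the Frobenius inner product. -/
lemma cs (X Y : Matrix (Fin n) (Fin n) ℂ) :
    ‖(Xᴴ * Y).trace‖ ^ 2 ≤ ((Xᴴ * X).trace).re * ((Yᴴ * Y).trace).re := by
  rw [trace_form, trace_self_re, trace_self_re]
  calc ‖∑ p : Fin n × Fin n, (starRingEnd ℂ) (X p.1 p.2) * Y p.1 p.2‖ ^ 2
      ≤ (∑ p : Fin n × Fin n, ‖X p.1 p.2‖ * ‖Y p.1 p.2‖) ^ 2 := by
        apply pow_le_pow_left₀ (norm_nonneg _)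
        refine (norm_sum_le _ _).trans_eq ?_
        congr 1; ext p; rw [norm_mul, Complex.norm_conj]
    _ ≤ _ := Finset.sum_mul_sq_le_sq_mul_sq _ _ _

lemma trace_psd_mul_psd_nonneg {M N : Matrix (Fin n) (Fin n) ℂ}
    (hM : M.PosSemidef) (hN : N.PosSemidef) : 0 ≤ ((M * N).trace).re := by
  obtain ⟨X, rfl⟩ := exists_ct hM
  obtain ⟨Y, rfl⟩ := exists_ct hN
  have h1 : ((Xᴴ*X) * (Yᴴ*Y)).trace = ((Y*Xᴴ)ᴴ * (Y*Xᴴ)).trace := by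
    rw [Matrix.mul_assoc, Matrix.trace_mul_comm]
    congr 1
    simp [Matrix.conjTranspose_mul, Matrix.mul_assoc]
  rw [h1]
  exact trace_self_re_nonneg _

lemma trace_sq_le {M N : Matrix (Fin n) (Fin n) ℂ} (hM : M.PosSemidef) (hN : N.PosSemidef)
    (h : (N - M).PosSemidef) : ((M * M).trace).re ≤ ((N * N).trace).re := by
  have key : N * N - M * M = (N - M) * N + M * (N - M) := by noncomm_ring
  have h1 : 0 ≤ (((N - M) * N).trace).re := trace_psd_mul_psd_nonneg h hN
  have h2 : 0 ≤ ((M * (N - M)).trace).re := trace_psd_mul_psd_nonneg hM h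
  have h3 : ((N*N).trace).re - ((M*M).trace).re
      = (((N-M)*N).trace).re + ((M*(N-M)).trace).re := by
    rw [← Complex.add_re, ← Matrix.trace_add, ← key, Matrix.trace_sub, Complex.sub_re]
  linarith

lemma psd_smul {M : Matrix (Fin n) (Fin n) ℂ} (hM : M.PosSemidef) {ε : ℝ} (hε : 0 ≤ ε) :
    ((ε:ℂ) • M).PosSemidef := by
  constructor
  · unfold Matrix.IsHermitian
    rw [Matrix.conjTranspose_smul, hM.isHermitian.eq]
    congr 1
    simp [Complex.star_def, Complex.conj_ofReal]
  · intro x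
    exact (hM.smul (a := (ε:ℂ)) (by exact_mod_cast hε)).2 x

lemma pd_smul_one {ε : ℝ} (hε : 0 < ε) : ((ε:ℂ) • (1 : Matrix (Fin n) (Fin n) ℂ)).PosDef := by
  have h : (ε:ℂ) • (1 : Matrix (Fin n) (Fin n) ℂ) = Matrix.diagonal (fun _ => (ε:ℂ)) := by
    ext i j
    rcases eq_or_ne i j with h | h <;> simp [Matrix.one_apply, Matrix.diagonal_apply, h]
  rw [h, Matrix.posDef_diagonal_iff]
  intro i
  exact_mod_cast hε

/-- The ε-regularized key inequality. -/
lemma key_eps (A B P Q : Matrix (Fin n) (Fin n) ℂ)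
    (hP : P.PosSemidef) (hQ : Q.PosSemidef)
    (hP2 : P * P = Aᴴ * A) (hQ2 : Q * Q = Bᴴ * B) {ε : ℝ} (hε : 0 < ε) :
    ‖(Aᴴ * B).trace‖ ^ 2 ≤
      (((P + (ε:ℂ) • 1) * (Q + (ε:ℂ) • 1)).trace).re *
        Real.sqrt (((Aᴴ * A).trace).re * ((Bᴴ * B).trace).re) := by
  set Pe : Matrix (Fin n) (Fin n) ℂ := P + (ε:ℂ) • 1 with hPe_def
  set Qe : Matrix (Fin n) (Fin n) ℂ := Q + (ε:ℂ) • 1 with hQe_def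
  have hPe : Pe.PosDef := Matrix.PosDef.posSemidef_add hP (pd_smul_one hε)
  have hQe : Qe.PosDef := Matrix.PosDef.posSemidef_add hQ (pd_smul_one hε)
  have hPei : Pe⁻¹.PosDef := hPe.inv
  have hQei : Qe⁻¹.PosDef := hQe.inv
  have detPe : IsUnit Pe.det := (Matrix.isUnit_iff_isUnit_det _).mp hPe.isUnit
  have detQe : IsUnit Qe.det := (Matrix.isUnit_iff_isUnit_det _).mp hQe.isUnit
  have hPe1 : Pe⁻¹ * Pe = 1 := Matrix.nonsing_inv_mul _ detPe
  have hQe1 : Qe⁻¹ * Qe = 1 := Matrix.nonsing_inv_mul _ detQe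
  obtain ⟨S, hS2, hSH⟩ : ∃ S : Matrix (Fin n) (Fin n) ℂ, S * S = Pe ∧ Sᴴ = S :=
    ⟨msqrt hPe.posSemidef, msqrt_mul_self hPe.posSemidef,
      (posSemidef_msqrt hPe.posSemidef).isHermitian.eq⟩
  obtain ⟨T, hT2, hTH⟩ : ∃ T : Matrix (Fin n) (Fin n) ℂ, T * T = Qe ∧ Tᴴ = T :=
    ⟨msqrt hQe.posSemidef, msqrt_mul_self hQe.posSemidef,
      (posSemidef_msqrt hQe.posSemidef).isHermitian.eq⟩
  set U : Matrix (Fin n) (Fin n) ℂ := A * Pe⁻¹ with hU_def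
  set V : Matrix (Fin n) (Fin n) ℂ := B * Qe⁻¹ with hV_def
  have hAU : U * Pe = A := by rw [hU_def, Matrix.mul_assoc, hPe1, Matrix.mul_one]
  have hBV : V * Qe = B := by rw [hV_def, Matrix.mul_assoc, hQe1, Matrix.mul_one]
  have hAH : Aᴴ = Pe * Uᴴ := by
    rw [← hAU, Matrix.conjTranspose_mul, hPe.isHermitian.eq]
  set X : Matrix (Fin n) (Fin n) ℂ := S * T with hX_def
  set Y : Matrix (Fin n) (Fin n) ℂ := S * (Uᴴ * (V * T)) with hY_def
  set R : Matrix (Fin n) (Fin n) ℂ := U * (Pe * Uᴴ) with hR_def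
  set R' : Matrix (Fin n) (Fin n) ℂ := V * (Qe * Vᴴ) with hR'_def
  -- trace identities
  have h_tr_XX : ((Xᴴ * X).trace) = ((Pe * Qe).trace) := by
    have e1 : Xᴴ * X = T * (Pe * T) := by
      rw [hX_def, Matrix.conjTranspose_mul, hSH, hTH, Matrix.mul_assoc,
        ← Matrix.mul_assoc S S T, hS2]
    rw [e1, Matrix.trace_mul_comm, Matrix.mul_assoc, hT2]
  have h_tr_XY : ((Xᴴ * Y).trace) = ((Aᴴ * B).trace) := by
    have e2 : Xᴴ * Y = T * (Pe * (Uᴴ * (V * T))) := by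
      rw [hX_def, hY_def, Matrix.conjTranspose_mul, hSH, hTH, Matrix.mul_assoc,
        ← Matrix.mul_assoc S S _, hS2]
    rw [e2, Matrix.trace_mul_comm]
    have e3 : Pe * (Uᴴ * (V * T)) * T = Aᴴ * B := by
      simp only [Matrix.mul_assoc]
      rw [hT2, hBV, ← Matrix.mul_assoc, ← hAH]
    rw [e3]
  have h_tr_YY : ((Yᴴ * Y).trace) = ((R * R').trace) := by
    have e4 : Yᴴ * Y = T * (Vᴴ * (U * (Pe * (Uᴴ * (V * T))))) := by
      rw [hY_def]
      simp only [Matrix.conjTranspose_mul, Matrix.conjTranspose_conjTranspose, hSH, hTH, Matrix.mul_assoc]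
      congr 1
      rw [← Matrix.mul_assoc S S, hS2]
    rw [e4, Matrix.trace_mul_comm]
    have e5 : Vᴴ * (U * (Pe * (Uᴴ * (V * T)))) * T = Vᴴ * (R * (V * (T * T))) := by
      rw [hR_def]; simp only [Matrix.mul_assoc]
    rw [e5, hT2, Matrix.trace_mul_comm, hR'_def]
    congr 1
    simp only [Matrix.mul_assoc]
  -- hermitians / psd of R, R'
  have hUH : Uᴴ = Pe⁻¹ * Aᴴ := by
    rw [hU_def, Matrix.conjTranspose_mul, hPei.isHermitian.eq]
  have hVH : Vᴴ = Qe⁻¹ * Bᴴ := by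
    rw [hV_def, Matrix.conjTranspose_mul, hQei.isHermitian.eq]
  have hR_psd : R.PosSemidef := by
    have := hPe.posSemidef.mul_mul_conjTranspose_same U
    rw [Matrix.mul_assoc] at this
    exact this
  have hR'_psd : R'.PosSemidef := by
    have := hQe.posSemidef.mul_mul_conjTranspose_same V
    rw [Matrix.mul_assoc] at this
    exact this
  have hRH : Rᴴ = R := hR_psd.isHermitian.eq
  have hR'H : R'ᴴ = R' := hR'_psd.isHermitian.eq
  -- step: tr(R*R) ≤ tr(AᴴA)
  have tr_RR_le : ∀ (C Ce : Matrix (Fin n) (Fin n) ℂ) (P' : Matrix (Fin n) (Fin n) ℂ),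
      P'.PosSemidef → P' * P' = Cᴴ * C → Ce = P' + (ε:ℂ) • 1 → Ce.PosDef →
      (((C * (Ce⁻¹ * Cᴴ)) * (C * (Ce⁻¹ * Cᴴ))).trace).re ≤ ((Cᴴ * C).trace).re := by
    intro C Ce P' hP' hP'2 hCe_def hCe
    have hCei : Ce⁻¹.PosDef := hCe.inv
    have detCe : IsUnit Ce.det := (Matrix.isUnit_iff_isUnit_det _).mp hCe.isUnit
    have hCe1 : Ce⁻¹ * Ce = 1 := Matrix.nonsing_inv_mul _ detCe
    set M : Matrix (Fin n) (Fin n) ℂ := P' * (Ce⁻¹ * P') with hM_def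
    have hM_psd : M.PosSemidef := by
      have := hCei.posSemidef.conjTranspose_mul_mul_same P'
      rw [hP'.isHermitian.eq, Matrix.mul_assoc] at this
      exact this
    -- P' - M is PSD
    have hCeP'_psd : (Ce * P').PosSemidef := by
      have e : Ce * P' = P' * P' + (ε:ℂ) • P' := by
        rw [hCe_def, Matrix.add_mul, Matrix.smul_mul, Matrix.one_mul]
      rw [e, hP'2]
      exact (Matrix.posSemidef_conjTranspose_mul_self C).add (psd_smul hP' hε.le)
    have hsub : (P' - M).PosSemidef := by
      have e : P' - M = (ε:ℂ) • ((Ce⁻¹)ᴴ * (Ce * P') * Ce⁻¹) := by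
        rw [hCei.isHermitian.eq]
        have e1 : Ce⁻¹ * (Ce * P') * Ce⁻¹ = P' * Ce⁻¹ := by
          rw [← Matrix.mul_assoc, hCe1, Matrix.one_mul]
        rw [e1, hM_def]
        have e2 : P' * (Ce⁻¹ * Ce) = P' := by rw [hCe1, Matrix.mul_one]
        have e3 : Ce⁻¹ * Ce = Ce⁻¹ * P' + (ε:ℂ) • Ce⁻¹ := by
          rw [hCe_def, Matrix.mul_add, Matrix.mul_smul, Matrix.mul_one]
        calc P' - P' * (Ce⁻¹ * P')
            = P' * (Ce⁻¹ * P' + (ε:ℂ) • Ce⁻¹) - P' * (Ce⁻¹ * P') := by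
              rw [← e3, e2]
          _ = (ε:ℂ) • (P' * Ce⁻¹) := by
              rw [Matrix.mul_add, Matrix.mul_smul]; abel
      rw [e]
      exact psd_smul (hCeP'_psd.conjTranspose_mul_mul_same _) hε.le
    have hMM := trace_sq_le hM_psd hP' hsub
    rw [hP'2] at hMM
    refine le_trans (le_of_eq ?_) hMM
    -- tr((C(Ce⁻¹Cᴴ))²) = tr(M²)
    congr 1
    have lhs_eq : (C * (Ce⁻¹ * Cᴴ)) * (C * (Ce⁻¹ * Cᴴ)) = C * (Ce⁻¹ * (Cᴴ * (C * (Ce⁻¹ * Cᴴ)))) := by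
      simp only [Matrix.mul_assoc]
    rw [lhs_eq, Matrix.trace_mul_comm]
    have e6 : (Ce⁻¹ * (Cᴴ * (C * (Ce⁻¹ * Cᴴ)))) * C
        = Ce⁻¹ * ((Cᴴ * C) * (Ce⁻¹ * (Cᴴ * C))) := by
      simp only [Matrix.mul_assoc]
    rw [e6, ← hP'2, hM_def]
    have e7 : (P' * (Ce⁻¹ * P')) * (P' * (Ce⁻¹ * P'))
        = P' * (Ce⁻¹ * (P' * (P' * (Ce⁻¹ * P')))) := by
      simp only [Matrix.mul_assoc]
    rw [e7, Matrix.trace_mul_comm (P') (Ce⁻¹ * (P' * (P' * (Ce⁻¹ * P'))))]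
    congr 1
    simp only [Matrix.mul_assoc]
  -- apply tr_RR_le to A and B
  have hR_eq : R = A * (Pe⁻¹ * Aᴴ) := by
    rw [hR_def, hUH, hU_def]
    calc (A * Pe⁻¹) * (Pe * (Pe⁻¹ * Aᴴ)) = A * (Pe⁻¹ * Pe * (Pe⁻¹ * Aᴴ)) := by
          simp only [Matrix.mul_assoc]
      _ = A * (Pe⁻¹ * Aᴴ) := by rw [hPe1, Matrix.one_mul]
  have hR'_eq : R' = B * (Qe⁻¹ * Bᴴ) := by
    rw [hR'_def, hVH, hV_def]
    calc (B * Qe⁻¹) * (Qe * (Qe⁻¹ * Bᴴ)) = B * (Qe⁻¹ * Qe * (Qe⁻¹ * Bᴴ)) := by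
          simp only [Matrix.mul_assoc]
      _ = B * (Qe⁻¹ * Bᴴ) := by rw [hQe1, Matrix.one_mul]
  have hRRa : ((R * R).trace).re ≤ ((Aᴴ * A).trace).re := by
    rw [hR_eq]
    exact tr_RR_le A Pe P hP hP2 hPe_def hPe
  have hR'R'b : ((R' * R').trace).re ≤ ((Bᴴ * B).trace).re := by
    rw [hR'_eq]
    exact tr_RR_le B Qe Q hQ hQ2 hQe_def hQe
  have hRRnn : 0 ≤ ((R * R).trace).re := by
    have h := trace_self_re_nonneg R
    rwa [hRH] at h
  have hR'R'nn : 0 ≤ ((R' * R').trace).re := by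
    have h := trace_self_re_nonneg R'
    rwa [hR'H] at h
  have hann : 0 ≤ ((Aᴴ * A).trace).re := trace_self_re_nonneg A
  have hstep2 : ((R * R').trace).re ≤
      Real.sqrt (((Aᴴ * A).trace).re * ((Bᴴ * B).trace).re) := by
    have hcs := cs R R'
    rw [hRH, hR'H] at hcs
    refine (Complex.re_le_norm _).trans ?_
    rw [← Real.sqrt_sq (norm_nonneg ((R * R').trace))]
    apply Real.sqrt_le_sqrt
    exact hcs.trans (mul_le_mul hRRa hR'R'b hR'R'nn hann)
  have hPQnn : 0 ≤ ((Pe * Qe).trace).re :=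
    trace_psd_mul_psd_nonneg hPe.posSemidef hQe.posSemidef
  have hcs0 := cs X Y
  rw [h_tr_XY, h_tr_XX, h_tr_YY] at hcs0
  exact hcs0.trans (mul_le_mul_of_nonneg_left hstep2 hPQnn)

/-- The key inequality, after letting ε → 0. -/
lemma key (A B P Q : Matrix (Fin n) (Fin n) ℂ)
    (hP : P.PosSemidef) (hQ : Q.PosSemidef)
    (hP2 : P * P = Aᴴ * A) (hQ2 : Q * Q = Bᴴ * B) :
    ‖(Aᴴ * B).trace‖ ^ 2 ≤
      ((P * Q).trace).re * Real.sqrt (((Aᴴ * A).trace).re * ((Bᴴ * B).trace).re) := by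
  set s : ℝ := Real.sqrt (((Aᴴ * A).trace).re * ((Bᴴ * B).trace).re) with hs_def
  set c : ℝ := ((P * Q).trace).re with hc_def
  set k : ℝ := (P.trace).re + (Q.trace).re with hk_def
  have hexp : ∀ ε : ℝ, (((P + (ε:ℂ) • 1) * (Q + (ε:ℂ) • 1)).trace).re
      = c + ε * k + ε ^ 2 * (n : ℝ) := by
    intro ε
    have e : (P + (ε:ℂ) • 1) * (Q + (ε:ℂ) • 1)
        = P * Q + (ε:ℂ) • P + ((ε:ℂ) • Q + ((ε:ℂ) * (ε:ℂ)) • (1 : Matrix (Fin n) (Fin n) ℂ)) := by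
      simp only [Matrix.add_mul, Matrix.mul_add, Matrix.smul_mul, Matrix.mul_smul,
        Matrix.one_mul, Matrix.mul_one, smul_smul, smul_add]
      abel
    rw [e]
    simp only [Matrix.trace_add, Matrix.trace_smul, Matrix.trace_one, smul_eq_mul,
      Complex.add_re, Complex.mul_re, Complex.ofReal_re, Complex.ofReal_im,
      Complex.natCast_re, Complex.natCast_im, Fintype.card_fin]
    ring
  have hcnn : 0 ≤ c := trace_psd_mul_psd_nonneg hP hQ
  have hsnn : 0 ≤ s := Real.sqrt_nonneg _
  have hf : Filter.Tendsto (fun ε : ℝ => (c + ε * k + ε ^ 2 * (n : ℝ)) * s)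
      (nhdsWithin 0 (Set.Ioi (0:ℝ))) (nhds (c * s)) := by
    have hcont : Continuous (fun ε : ℝ => (c + ε * k + ε ^ 2 * (n : ℝ)) * s) := by
      continuity
    have h := (hcont.tendsto 0).mono_left (nhdsWithin_le_nhds (s := Set.Ioi (0:ℝ)))
    simpa using h
  refine ge_of_tendsto hf ?_
  filter_upwards [self_mem_nhdsWithin] with ε hε
  have hkey := key_eps A B P Q hP hQ hP2 hQ2 (Set.mem_Ioi.mp hε)
  rwa [hexp ε] at hkey

end FrobAux

/-- The absolute value `|A| := (A*A)^{1/2}` of a square complex matrix, i.e. the (unique)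
positive semidefinite square root of `Aᴴ * A`. -/
noncomputable def matrixAbs {n : ℕ} (A : Matrix (Fin n) (Fin n) ℂ) :
    Matrix (Fin n) (Fin n) ℂ :=
  ((Matrix.posSemidef_conjTranspose_mul_self A).1.eigenvectorUnitary : Matrix (Fin n) (Fin n) ℂ) *
    Matrix.diagonal ((↑) ∘ Real.sqrt ∘ (Matrix.posSemidef_conjTranspose_mul_self A).1.eigenvalues) *
    (star ((Matrix.posSemidef_conjTranspose_mul_self A).1.eigenvectorUnitary : Matrix (Fin n) (Fin n) ℂ))

/-- The Frobenius norm `‖A‖_F = (tr |A|²)^{1/2}` of a square complex matrix. -/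
noncomputable def frobeniusNorm' {n : ℕ} (A : Matrix (Fin n) (Fin n) ℂ) : ℝ :=
  Real.sqrt ((matrixAbs A ^ 2).trace.re)

/-- For all `n × n` complex matrices `A, B` and every real `t > 0`,
`2·‖A+B‖_F² ≤ (2+t)·tr(|A|² + |B|²) + (1/t)·tr(|A||B| + |B||A|)`. -/
theorem two_mul_sq_frobenius_norm_add_le {n : ℕ} (A B : Matrix (Fin n) (Fin n) ℂ)
    (t : ℝ) (ht : 0 < t) :
    2 * frobeniusNorm' (A + B) ^ 2 ≤
      (2 + t) * (matrixAbs A ^ 2 + matrixAbs B ^ 2).trace.re +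
        (1 / t) * (matrixAbs A * matrixAbs B + matrixAbs B * matrixAbs A).trace.re := by
  have hPsd := Matrix.posSemidef_conjTranspose_mul_self A
  have hQsd := Matrix.posSemidef_conjTranspose_mul_self B
  have hP : (matrixAbs A).PosSemidef := FrobAux.posSemidef_msqrt hPsd
  have hQ : (matrixAbs B).PosSemidef := FrobAux.posSemidef_msqrt hQsd
  have hP2 : matrixAbs A * matrixAbs A = Aᴴ * A := FrobAux.msqrt_mul_self hPsd
  have hQ2 : matrixAbs B * matrixAbs B = Bᴴ * B := FrobAux.msqrt_mul_self hQsd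
  set a : ℝ := ((Aᴴ * A).trace).re with ha_def
  set b : ℝ := ((Bᴴ * B).trace).re with hb_def
  set c : ℝ := ((matrixAbs A * matrixAbs B).trace).re with hc_def
  set r : ℝ := ((Aᴴ * B).trace).re with hr_def
  set m : ℝ := ‖(Aᴴ * B).trace‖ with hm_def
  have ha : 0 ≤ a := FrobAux.trace_self_re_nonneg A
  have hb : 0 ≤ b := FrobAux.trace_self_re_nonneg B
  have hc : 0 ≤ c := FrobAux.trace_psd_mul_psd_nonneg hP hQ
  have hr : r ≤ m := Complex.re_le_norm _
  have hm : 0 ≤ m := norm_nonneg _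
  -- rewrite the goal into real arithmetic
  have habs : matrixAbs (A + B) ^ 2 = (A + B)ᴴ * (A + B) :=
    by rw [pow_two]; exact FrobAux.msqrt_mul_self (Matrix.posSemidef_conjTranspose_mul_self (A + B))
  have hfrob : frobeniusNorm' (A + B) ^ 2 = (((A + B)ᴴ * (A + B)).trace).re := by
    unfold frobeniusNorm'
    rw [habs, Real.sq_sqrt (FrobAux.trace_self_re_nonneg _)]
  have hLHS : (((A + B)ᴴ * (A + B)).trace).re = a + b + 2 * r := by
    have em : (A + B)ᴴ * (A + B) = Aᴴ * A + (Aᴴ * B + ((Aᴴ * B)ᴴ + Bᴴ * B)) := by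
      rw [Matrix.conjTranspose_add, Matrix.add_mul, Matrix.mul_add, Matrix.mul_add,
        Matrix.conjTranspose_mul, Matrix.conjTranspose_conjTranspose]
      abel
    rw [em]
    simp only [Matrix.trace_add, Complex.add_re, Matrix.trace_conjTranspose]
    have hst : (star ((Aᴴ * B).trace)).re = ((Aᴴ * B).trace).re := by
      simp [Complex.star_def]
    rw [hst, ← ha_def, ← hb_def, ← hr_def]
    ring
  have hRHS1 : ((matrixAbs A ^ 2 + matrixAbs B ^ 2).trace).re = a + b := by
    rw [Matrix.trace_add, Complex.add_re, pow_two, pow_two, hP2, hQ2]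
  have hRHS2 : ((matrixAbs A * matrixAbs B + matrixAbs B * matrixAbs A).trace).re = 2 * c := by
    rw [Matrix.trace_add, Complex.add_re, Matrix.trace_mul_comm (matrixAbs B) (matrixAbs A),
      ← hc_def]
    ring
  rw [hfrob, hLHS, hRHS1, hRHS2]
  -- the key inequality
  have hkey := FrobAux.key A B (matrixAbs A) (matrixAbs B) hP hQ hP2 hQ2
  have hsqrtab : Real.sqrt (a * b) ≤ (a + b) / 2 := by
    rw [show (a + b) / 2 = Real.sqrt (((a + b) / 2) ^ 2) from
      (Real.sqrt_sq (by positivity)).symm]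
    exact Real.sqrt_le_sqrt (by nlinarith [sq_nonneg (a - b)])
  have key2 : m ^ 2 ≤ c * ((a + b) / 2) :=
    hkey.trans (mul_le_mul_of_nonneg_left hsqrtab hc)
  have key3 : 4 * r * t ≤ t ^ 2 * (a + b) + 2 * c := by
    rcases eq_or_lt_of_le (by positivity : (0:ℝ) ≤ a + b) with h0 | hpos
    · have hm2 : m ^ 2 ≤ 0 := by
        calc m ^ 2 ≤ c * ((a + b) / 2) := key2
          _ = 0 := by rw [← h0]; ring
      have hm0 : m ≤ 0 := by nlinarith
      have hr0 : r ≤ 0 := hr.trans hm0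
      nlinarith [mul_nonneg ht.le (neg_nonneg.mpr hr0), hc, h0.symm]
    · nlinarith [sq_nonneg (t * (a + b) - 2 * m), key2,
        mul_nonneg (mul_pos ht hpos).le (sub_nonneg.mpr hr), hm]
  have hident : (2 + t) * (a + b) + (1 / t) * (2 * c) - 2 * (a + b + 2 * r)
      = (t ^ 2 * (a + b) + 2 * c - 4 * r * t) / t := by
    field_simp
    ring
  have hnn : 0 ≤ (t ^ 2 * (a + b) + 2 * c - 4 * r * t) / t :=
    div_nonneg (sub_nonneg.mpr key3) ht.le
  linarith
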